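/- Let a < b < c < d be real numbers, and in the hyperbolic upper half-plane ℍ (with its standard hyperbolic metric) let ℓ₁ = {z ∈ ℍ : |z − (a + b)/2| = (b − a)/2} and ℓ₂ = {z ∈ ℍ : |z − (c + d)/2| = (d − c)/2} be the geodesics with boundary endpoints {a, b} and {c, d} respectively. Then, with D = inf{dist(z, w) : z ∈ ℓ₁, w ∈ ℓ₂} the hyperbolic distance between ℓ₁ and ℓ₂, one has sinh(D/2)² = ((c − b)·(d − a))/((b − a)·(d − c)). -/

import Mathlib

set_option maxHeartbeats 1000000

lemma key_ineq (r1 r2 M p q y v : ℝ) (hr1 : 0 < r1) (hr2 : 0 < r2)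
    (hM : r1 + r2 < M) (hy : 0 < y) (hv : 0 < v)
    (hp : p ^ 2 + y ^ 2 = r1 ^ 2) (hq : q ^ 2 + v ^ 2 = r2 ^ 2) :
    (M ^ 2 - (r1 + r2) ^ 2) * (y * v) ≤ r1 * r2 * ((p - q - M) ^ 2 + (y - v) ^ 2) := by
  obtain ⟨A, hA⟩ : ∃ A : ℝ, A = M ^ 2 - r1 ^ 2 - r2 ^ 2 := ⟨_, rfl⟩
  obtain ⟨k, hk⟩ : ∃ k : ℝ, k = 4 * r2 ^ 2 * (M ^ 2 - r1 ^ 2) + A ^ 2 := ⟨_, rfl⟩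
  obtain ⟨C, hC⟩ : ∃ C : ℝ, C = M ^ 2 + r1 ^ 2 + r2 ^ 2 + 2 * M * q := ⟨_, rfl⟩
  obtain ⟨G, hG⟩ : ∃ G : ℝ, G = 2 * r1 * r2 * p * (M + q) + A * y * v := ⟨_, rfl⟩
  obtain ⟨H, hH⟩ : ∃ H : ℝ, H = 2 * r1 * r2 * (M + q) * y - A * v * p := ⟨_, rfl⟩
  have hMpos : 0 < M := by nlinarith
  have hM2 : r1 ^ 2 < M ^ 2 := by nlinarith
  have hkpos : 0 < k := by
    rw [hk]
    have := mul_pos (pow_pos hr2 2) (sub_pos.mpr hM2)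
    nlinarith [sq_nonneg A]
  have hq2 : q ^ 2 ≤ r2 ^ 2 := by nlinarith
  have hqr : -r2 ≤ q := by nlinarith [sq_nonneg (q + r2), mul_pos hv hv]
  have hCpos : 0 < C := by
    rw [hC]
    nlinarith [sq_nonneg (M - r2), mul_nonneg hMpos.le (by linarith : (0:ℝ) ≤ q + r2)]
  have hquad : k * (r2 ^ 2 * C ^ 2 - 4 * r1 ^ 2 * r2 ^ 2 * (M + q) ^ 2 - A ^ 2 * v ^ 2)
      = (k * q + 2 * M * r2 ^ 2 * (M ^ 2 - r1 ^ 2 + r2 ^ 2)) ^ 2 := by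
    have hv2 : v ^ 2 = r2 ^ 2 - q ^ 2 := by linarith
    subst hk hC hA; rw [hv2]; ring
  have h1 : 0 ≤ r2 ^ 2 * C ^ 2 - 4 * r1 ^ 2 * r2 ^ 2 * (M + q) ^ 2 - A ^ 2 * v ^ 2 := by
    have h0 : 0 ≤ k * (r2 ^ 2 * C ^ 2 - 4 * r1 ^ 2 * r2 ^ 2 * (M + q) ^ 2 - A ^ 2 * v ^ 2) :=
      hquad ▸ sq_nonneg _
    exact (mul_nonneg_iff_of_pos_left hkpos).mp h0
  have hGH : G ^ 2 + H ^ 2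
      = (4 * r1 ^ 2 * r2 ^ 2 * (M + q) ^ 2 + A ^ 2 * v ^ 2) * (p ^ 2 + y ^ 2) := by
    subst hG hH; ring
  rw [hp] at hGH
  have h2 : (4 * r1 ^ 2 * r2 ^ 2 * (M + q) ^ 2 + A ^ 2 * v ^ 2) * r1 ^ 2
      ≤ r2 ^ 2 * C ^ 2 * r1 ^ 2 :=
    mul_le_mul_of_nonneg_right (by linarith) (sq_nonneg r1)
  have hG2 : G ^ 2 ≤ (r1 * r2 * C) ^ 2 := by nlinarith [sq_nonneg H]
  have hGle : G ≤ r1 * r2 * C := by nlinarith [mul_pos (mul_pos hr1 hr2) hCpos]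
  have hfin : r1 * r2 * ((p - q - M) ^ 2 + (y - v) ^ 2) - (M ^ 2 - (r1 + r2) ^ 2) * (y * v)
      = r1 * r2 * C - G := by
    subst hC hG hA; linear_combination (r1 * r2) * hp + (r1 * r2) * hq
  linarith

lemma witness_pt (a b c d : ℝ) (hab : a < b) (hbc : b < c) (hcd : c < d) :
    ∃ x0 y0 u0 v0 : ℝ, 0 < y0 ∧ 0 < v0 ∧
      (x0 - (a + b) / 2) ^ 2 + y0 ^ 2 = ((b - a) / 2) ^ 2 ∧
      (u0 - (c + d) / 2) ^ 2 + v0 ^ 2 = ((d - c) / 2) ^ 2 ∧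
      (x0 - u0) ^ 2 + (y0 - v0) ^ 2
        = 4 * ((c - b) * (d - a) / ((b - a) * (d - c))) * (y0 * v0) := by
  have hca : (0:ℝ) < c - a := by linarith
  have hdb : (0:ℝ) < d - b := by linarith
  have hcb : (0:ℝ) < c - b := by linarith
  have hda : (0:ℝ) < d - a := by linarith
  have hba : (0:ℝ) < b - a := by linarith
  have hdc : (0:ℝ) < d - c := by linarith
  obtain ⟨s, hs⟩ : ∃ t : ℝ, t = c + d - a - b := ⟨_, rfl⟩
  obtain ⟨E, hEd⟩ : ∃ t : ℝ, t = (c - a) * (d - a) * ((c - b) * (d - b)) := ⟨_, rfl⟩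
  obtain ⟨D1, hD1d⟩ : ∃ t : ℝ, t = 2 * (c * d - a * b) - (a + b) * s := ⟨_, rfl⟩
  obtain ⟨D2, hD2d⟩ : ∃ t : ℝ, t = (c + d) * s - 2 * (c * d - a * b) := ⟨_, rfl⟩
  obtain ⟨xN, hxN⟩ : ∃ t : ℝ, t = (c * d - a * b) * (a + b) - 2 * a * b * s := ⟨_, rfl⟩
  obtain ⟨uN, huN⟩ : ∃ t : ℝ, t = 2 * c * d * s - (c * d - a * b) * (c + d) := ⟨_, rfl⟩
  have hE : 0 < E := by rw [hEd]; exact mul_pos (mul_pos hca hda) (mul_pos hcb hdb)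
  have hD1 : 0 < D1 := by
    rw [hD1d, hs]; nlinarith [mul_pos hca hdb, mul_pos hda hcb, sq_nonneg (a - b)]
  have hD2 : 0 < D2 := by
    rw [hD2d, hs]; nlinarith [mul_pos hca hdb, mul_pos hda hcb, sq_nonneg (c - d)]
  have core : 4 * s ^ 2 * E + ((b - a) * D2 - (d - c) * D1) ^ 2
      = 4 * (c - b) * (d - a) * D1 * D2 := by
    rw [hEd, hD1d, hD2d, hs]; ring
  have mem1 : (xN - (a + b) / 2 * D1) ^ 2 + (b - a) ^ 2 * E = ((b - a) / 2) ^ 2 * D1 ^ 2 := by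
    rw [hxN, hEd, hD1d, hs]; ring
  have mem2 : (uN - (c + d) / 2 * D2) ^ 2 + (d - c) ^ 2 * E = ((d - c) / 2) ^ 2 * D2 ^ 2 := by
    rw [huN, hEd, hD2d, hs]; ring
  have hV : xN * D2 - uN * D1 = -(2 * s * E) := by
    rw [hxN, huN, hEd, hD1d, hD2d, hs]; ring
  have hsE : 0 < Real.sqrt E := Real.sqrt_pos.mpr hE
  have hss : Real.sqrt E * Real.sqrt E = E := Real.mul_self_sqrt hE.le
  refine ⟨xN / D1, (b - a) * Real.sqrt E / D1, uN / D2, (d - c) * Real.sqrt E / D2,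
    div_pos (mul_pos hba hsE) hD1, div_pos (mul_pos hdc hsE) hD2, ?_, ?_, ?_⟩
  · have hy2 : ((b - a) * Real.sqrt E / D1) ^ 2 = (b - a) ^ 2 * E / D1 ^ 2 := by
      field_simp; linear_combination hss
    rw [hy2]
    field_simp
    linear_combination 4 * mem1
  · have hv2 : ((d - c) * Real.sqrt E / D2) ^ 2 = (d - c) ^ 2 * E / D2 ^ 2 := by
      field_simp; linear_combination hss
    rw [hv2]
    field_simp
    linear_combination 4 * mem2
  · have hy2 : ((b - a) * Real.sqrt E / D1) ^ 2 = (b - a) ^ 2 * E / D1 ^ 2 := by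
      field_simp; linear_combination hss
    have hv2 : ((d - c) * Real.sqrt E / D2) ^ 2 = (d - c) ^ 2 * E / D2 ^ 2 := by
      field_simp; linear_combination hss
    have hyv : ((b - a) * Real.sqrt E / D1) * ((d - c) * Real.sqrt E / D2)
        = (b - a) * (d - c) * E / (D1 * D2) := by
      field_simp; linear_combination hss
    have hxu : xN / D1 - uN / D2 = -(2 * s * E) / (D1 * D2) := by
      rw [div_sub_div _ _ hD1.ne' hD2.ne', mul_comm D1 uN, hV]
    have hsub : ((b - a) * Real.sqrt E / D1 - (d - c) * Real.sqrt E / D2) ^ 2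
        = (b - a) ^ 2 * E / D1 ^ 2 + (d - c) ^ 2 * E / D2 ^ 2
          - 2 * ((b - a) * (d - c) * E / (D1 * D2)) := by
      linear_combination hy2 + hv2 - 2 * hyv
    rw [hxu, hsub, hyv]
    field_simp
    linear_combination core

open UpperHalfPlane

theorem sinh_half_dist_between_geodesics (a b c d : ℝ) (hab : a < b) (hbc : b < c)
    (hcd : c < d) :
    Real.sinh (sInf {r : ℝ |
        ∃ z : UpperHalfPlane, ‖(z : ℂ) - (((a + b) / 2 : ℝ) : ℂ)‖ = (b - a) / 2 ∧
        ∃ w : UpperHalfPlane, ‖(w : ℂ) - (((c + d) / 2 : ℝ) : ℂ)‖ = (d - c) / 2 ∧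
          r = dist z w} / 2) ^ 2
      = (c - b) * (d - a) / ((b - a) * (d - c)) := by
  have hba : (0:ℝ) < b - a := by linarith
  have hdc : (0:ℝ) < d - c := by linarith
  have hcb : (0:ℝ) < c - b := by linarith
  have hda : (0:ℝ) < d - a := by linarith
  set X : ℝ := (c - b) * (d - a) / ((b - a) * (d - c)) with hXd
  have hX : 0 < X := div_pos (mul_pos hcb hda) (mul_pos hba hdc)
  set S : Set ℝ := {r : ℝ |
        ∃ z : UpperHalfPlane, ‖(z : ℂ) - (((a + b) / 2 : ℝ) : ℂ)‖ = (b - a) / 2 ∧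
        ∃ w : UpperHalfPlane, ‖(w : ℂ) - (((c + d) / 2 : ℝ) : ℂ)‖ = (d - c) / 2 ∧
          r = dist z w} with hSd
  -- lower bound
  have lower : ∀ r ∈ S, 2 * Real.arsinh (Real.sqrt X) ≤ r := by
    rintro r ⟨z, hz, w, hw, rfl⟩
    have hz' : ((z : ℂ).re - (a + b) / 2) ^ 2 + ((z : ℂ).im) ^ 2 = ((b - a) / 2) ^ 2 := by
      have h2 : ‖(z : ℂ) - (((a + b) / 2 : ℝ) : ℂ)‖ ^ 2 = ((b - a) / 2) ^ 2 := by
        rw [hz]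
      rw [Complex.sq_norm, Complex.normSq_apply] at h2
      simp only [Complex.sub_re, Complex.sub_im, Complex.ofReal_re, Complex.ofReal_im,
        sub_zero] at h2
      linear_combination h2
    have hw' : ((w : ℂ).re - (c + d) / 2) ^ 2 + ((w : ℂ).im) ^ 2 = ((d - c) / 2) ^ 2 := by
      have h2 : ‖(w : ℂ) - (((c + d) / 2 : ℝ) : ℂ)‖ ^ 2 = ((d - c) / 2) ^ 2 := by
        rw [hw]
      rw [Complex.sq_norm, Complex.normSq_apply] at h2
      simp only [Complex.sub_re, Complex.sub_im, Complex.ofReal_re, Complex.ofReal_im,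
        sub_zero] at h2
      linear_combination h2
    have hzim : 0 < (z : ℂ).im := z.2
    have hwim : 0 < (w : ℂ).im := w.2
    have key := key_ineq ((b - a) / 2) ((d - c) / 2) ((c + d) / 2 - (a + b) / 2)
      ((z : ℂ).re - (a + b) / 2) ((w : ℂ).re - (c + d) / 2) ((z : ℂ).im) ((w : ℂ).im)
      (by linarith) (by linarith) (by linarith) hzim hwim hz' hw'
    have hd2 : dist (z : ℂ) (w : ℂ) ^ 2
        = ((z : ℂ).re - (w : ℂ).re) ^ 2 + ((z : ℂ).im - (w : ℂ).im) ^ 2 := by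
      rw [Complex.dist_eq, Complex.sq_norm, Complex.normSq_apply]
      simp only [Complex.sub_re, Complex.sub_im]
      ring
    have hXle : X ≤ dist (z : ℂ) (w : ℂ) ^ 2 / (4 * ((z : ℂ).im * (w : ℂ).im)) := by
      rw [hXd, div_le_div_iff₀ (by positivity) (by positivity), hd2]
      nlinarith [key]
    rw [UpperHalfPlane.dist_eq]
    have ht0 : 0 ≤ dist (z : ℂ) (w : ℂ) / (2 * Real.sqrt (z.im * w.im)) := by positivity
    have ht2 : (dist (z : ℂ) (w : ℂ) / (2 * Real.sqrt (z.im * w.im))) ^ 2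
        = dist (z : ℂ) (w : ℂ) ^ 2 / (4 * ((z : ℂ).im * (w : ℂ).im)) := by
      rw [div_pow, mul_pow, Real.sq_sqrt (by positivity)]
      norm_num [UpperHalfPlane.coe_im]
    have hle : Real.sqrt X ≤ dist (z : ℂ) (w : ℂ) / (2 * Real.sqrt (z.im * w.im)) := by
      have := Real.sqrt_le_sqrt (ht2 ▸ hXle)
      rwa [Real.sqrt_sq ht0] at this
    have := Real.arsinh_le_arsinh.mpr hle
    linarith
  -- witness
  obtain ⟨x0, y0, u0, v0, hy0, hv0, hm1, hm2, heq⟩ := witness_pt a b c d hab hbc hcd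
  set z0 : ℍ := UpperHalfPlane.mk ⟨x0, y0⟩ hy0 with hz0d
  set w0 : ℍ := UpperHalfPlane.mk ⟨u0, v0⟩ hv0 with hw0d
  have hz0c : (z0 : ℂ) = ⟨x0, y0⟩ := rfl
  have hw0c : (w0 : ℂ) = ⟨u0, v0⟩ := rfl
  have hz0m : ‖(z0 : ℂ) - (((a + b) / 2 : ℝ) : ℂ)‖ = (b - a) / 2 := by
    rw [Complex.norm_def, Complex.normSq_apply, hz0c]
    simp only [Complex.sub_re, Complex.sub_im, Complex.ofReal_re, Complex.ofReal_im, sub_zero]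
    rw [show ((⟨x0, y0⟩ : ℂ).re - (a + b) / 2) * ((⟨x0, y0⟩ : ℂ).re - (a + b) / 2)
        + (⟨x0, y0⟩ : ℂ).im * (⟨x0, y0⟩ : ℂ).im = ((b - a) / 2) ^ 2 by
      linear_combination hm1]
    exact Real.sqrt_sq (by linarith)
  have hw0m : ‖(w0 : ℂ) - (((c + d) / 2 : ℝ) : ℂ)‖ = (d - c) / 2 := by
    rw [Complex.norm_def, Complex.normSq_apply, hw0c]
    simp only [Complex.sub_re, Complex.sub_im, Complex.ofReal_re, Complex.ofReal_im, sub_zero]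
    rw [show ((⟨u0, v0⟩ : ℂ).re - (c + d) / 2) * ((⟨u0, v0⟩ : ℂ).re - (c + d) / 2)
        + (⟨u0, v0⟩ : ℂ).im * (⟨u0, v0⟩ : ℂ).im = ((d - c) / 2) ^ 2 by
      linear_combination hm2]
    exact Real.sqrt_sq (by linarith)
  have hdist0 : dist z0 w0 = 2 * Real.arsinh (Real.sqrt X) := by
    rw [UpperHalfPlane.dist_eq]
    congr 1
    have him : z0.im = y0 := rfl
    have hwm : w0.im = v0 := rfl
    have hdc0 : dist (z0 : ℂ) (w0 : ℂ) = Real.sqrt ((x0 - u0) ^ 2 + (y0 - v0) ^ 2) := by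
      rw [Complex.dist_eq, Complex.norm_def, Complex.normSq_apply, hz0c, hw0c]
      simp only [Complex.sub_re, Complex.sub_im]
      norm_num
      ring_nf
    rw [hdc0, him, hwm, heq, hXd]
    rw [show 4 * ((c - b) * (d - a) / ((b - a) * (d - c))) * (y0 * v0)
        = (2 * Real.sqrt (y0 * v0)) ^ 2 * ((c - b) * (d - a) / ((b - a) * (d - c))) by
      rw [mul_pow, Real.sq_sqrt (by positivity)]; ring]
    rw [Real.sqrt_mul (by positivity), Real.sqrt_sq (by positivity)]
    have hs0 : Real.sqrt (y0 * v0) ≠ 0 := by positivity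
    congr 1
    field_simp
  have hmem : 2 * Real.arsinh (Real.sqrt X) ∈ S := ⟨z0, hz0m, w0, hw0m, hdist0.symm⟩
  have hbdd : BddBelow S := ⟨2 * Real.arsinh (Real.sqrt X), fun r hr => lower r hr⟩
  have hInf : sInf S = 2 * Real.arsinh (Real.sqrt X) :=
    le_antisymm (csInf_le hbdd hmem) (le_csInf ⟨_, hmem⟩ lower)
  rw [hInf, mul_div_cancel_left₀ _ (two_ne_zero), Real.sinh_arsinh, Real.sq_sqrt hX.le]
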